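/- Let h ∈ Σ_N, let C_X ∈ ℝ^{N×N} be symmetric and either CPD or CND, and let G(T) = min over C̄ ∈ ℝ^{n×n} of ∑_{ijkl} ([C_X]_{ik} − C̄_{jl})² T_{ij} T_{kl}. Then G is concave on the semi-relaxed coupling polytope U_n(h) = {T ∈ ℝ_+^{N×n} : T 1_n = h}. -/

import Mathlib

open Matrix

namespace Stmt13Aux

variable {N n : ℕ}

noncomputable def Pmat (T : Matrix (Fin N) (Fin n) ℝ) : Matrix (Fin N) (Fin N) ℝ :=
  T * Matrix.diagonal (fun j => (∑ i, T i j)⁻¹) * Tᵀ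

noncomputable def Sval (C : Matrix (Fin N) (Fin N) ℝ) (T : Matrix (Fin N) (Fin n) ℝ) : ℝ :=
  ∑ j, ∑ l, ((Tᵀ * C * T) j l) ^ 2 * ((∑ i, T i j) * (∑ i, T i l))⁻¹

lemma trace_sq_nonneg (M : Matrix (Fin N) (Fin N) ℝ) (hM : Mᵀ = M) :
    0 ≤ trace (M * M) := by
  refine Finset.sum_nonneg fun i _ => ?_
  rw [Matrix.diag, Matrix.mul_apply]
  refine Finset.sum_nonneg fun j _ => ?_
  have hji : M j i = M i j := by nth_rewrite 1 [← hM]; rw [transpose_apply]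
  rw [hji]
  exact mul_self_nonneg _

lemma psd_trace_nonneg {M : Matrix (Fin N) (Fin N) ℝ} (hM : M.PosSemidef) :
    0 ≤ trace M := by
  refine Finset.sum_nonneg fun i _ => ?_
  have h2 := hM.dotProduct_mulVec_nonneg (Pi.single i 1)
  simpa [dotProduct, mulVec, Pi.single_apply, Finset.sum_ite_eq, Finset.sum_ite_eq'] using h2

open scoped MatrixOrder in
lemma trace_mul_nonneg {P Q : Matrix (Fin N) (Fin N) ℝ} (hP : P.PosSemidef)
    (hQ : Q.PosSemidef) : 0 ≤ trace (P * Q) := by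
  obtain ⟨R, hRsym, hRR⟩ : ∃ R : Matrix (Fin N) (Fin N) ℝ, Rᴴ = R ∧ R * R = Q :=
    ⟨CFC.sqrt Q, (Matrix.nonneg_iff_posSemidef.mp (CFC.sqrt_nonneg Q)).isHermitian.eq,
      CFC.sqrt_mul_sqrt_self Q (Matrix.nonneg_iff_posSemidef.mpr hQ)⟩
  have key : trace (P * Q) = trace (R * P * Rᴴ) := by
    rw [hRsym, ← hRR, show P * (R * R) = (P * R) * R from by rw [Matrix.mul_assoc],
      trace_mul_comm, Matrix.mul_assoc]
  rw [key]
  exact psd_trace_nonneg (hP.mul_mul_conjTranspose_same R)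

open scoped MatrixOrder in
lemma trace_XCXC_nonneg_psd {C' X : Matrix (Fin N) (Fin N) ℝ} (hC : C'.PosSemidef)
    (hX : Xᵀ = X) : 0 ≤ trace (X * C' * X * C') := by
  obtain ⟨R, hRsym, hRR⟩ : ∃ R : Matrix (Fin N) (Fin N) ℝ, Rᵀ = R ∧ R * R = C' :=
    ⟨CFC.sqrt C', by rw [← conjTranspose_eq_transpose_of_trivial,
        (Matrix.nonneg_iff_posSemidef.mp (CFC.sqrt_nonneg C')).isHermitian.eq],
      CFC.sqrt_mul_sqrt_self C' (Matrix.nonneg_iff_posSemidef.mpr hC)⟩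
  have hS : (R * X * R)ᵀ = R * X * R := by
    rw [transpose_mul, transpose_mul, hRsym, hX, Matrix.mul_assoc]
  have key : X * C' * X * C' = (X * R * R * X * R) * R := by
    rw [← hRR]; simp only [Matrix.mul_assoc]
  have key2 : trace (X * C' * X * C') = trace ((R * X * R) * (R * X * R)) := by
    rw [key, trace_mul_comm]
    congr 1
    simp only [Matrix.mul_assoc]
  rw [key2]
  exact trace_sq_nonneg _ hS

lemma trace_conj_eq {E C X : Matrix (Fin N) (Fin N) ℝ} (hXE : X * E = X) (hEX : E * X = X) :
    trace (X * (E * C * E) * X * (E * C * E)) = trace (X * C * X * C) := by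
  have key : X * (E * C * E) * X * (E * C * E) = ((X * C * X) * (E * C)) * E := by
    rw [show X * (E * C * E) = X * C * E from by
      rw [← Matrix.mul_assoc, ← Matrix.mul_assoc, hXE]]
    rw [show X * C * E * X = X * C * X from by rw [Matrix.mul_assoc, hEX]]
    simp only [Matrix.mul_assoc]
  rw [key, trace_mul_comm]
  rw [show E * ((X * C * X) * (E * C)) = ((E * (X * C * X)) * E) * C from by
    simp only [Matrix.mul_assoc]]
  rw [show E * (X * C * X) = X * C * X from by
    rw [← Matrix.mul_assoc, ← Matrix.mul_assoc, hEX]]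
  rw [show X * C * X * E = X * C * X from by rw [Matrix.mul_assoc, hXE]]

lemma trace_XCXC_nonneg_cpd (hN : (N:ℝ) ≠ 0) {C X : Matrix (Fin N) (Fin N) ℝ}
    (hsym : Cᵀ = C) (hcpd : ∀ x : Fin N → ℝ, (∑ i, x i) = 0 → 0 ≤ x ⬝ᵥ C.mulVec x)
    (hX : Xᵀ = X) (hX1 : ∀ i, ∑ j, X i j = 0) : 0 ≤ trace (X * C * X * C) := by
  set E : Matrix (Fin N) (Fin N) ℝ :=
    1 - (N:ℝ)⁻¹ • Matrix.of (fun _ _ => (1:ℝ)) with hE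
  have hEsym : Eᵀ = E := by
    ext i j
    simp [hE, Matrix.one_apply, eq_comm]
  have hXcol : ∀ j, ∑ i, X i j = 0 := by
    intro j
    have hs : ∀ a b, X a b = X b a := fun a b => by nth_rewrite 1 [← hX]; rw [transpose_apply]
    calc ∑ i, X i j = ∑ i, X j i := Finset.sum_congr rfl fun i _ => hs i j
    _ = 0 := hX1 j
  have hXE : X * E = X := by
    ext i j
    simp only [hE, Matrix.mul_apply, Matrix.sub_apply, Matrix.one_apply, Matrix.smul_apply,
      Matrix.of_apply, smul_eq_mul, mul_one, mul_sub, mul_ite, mul_zero]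
    rw [Finset.sum_sub_distrib]
    simp [Finset.sum_ite_eq', ← Finset.sum_mul, hX1 i]
  have hEX : E * X = X := by
    ext i j
    simp only [hE, Matrix.mul_apply, Matrix.sub_apply, Matrix.one_apply, Matrix.smul_apply,
      Matrix.of_apply, smul_eq_mul, mul_one, sub_mul, ite_mul, zero_mul, one_mul]
    rw [Finset.sum_sub_distrib]
    simp [Finset.sum_ite_eq, ← Finset.mul_sum, hXcol j]
  have hEmv : ∀ x : Fin N → ℝ, (∑ i, (E *ᵥ x) i) = 0 := by
    intro x
    simp only [mulVec, dotProduct, hE, Matrix.sub_apply, Matrix.one_apply, Matrix.smul_apply,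
      Matrix.of_apply, smul_eq_mul, mul_one, sub_mul, ite_mul, zero_mul, one_mul]
    simp only [Finset.sum_sub_distrib, Finset.sum_ite_eq, Finset.mem_univ, if_true,
      ← Finset.mul_sum, Finset.sum_const, Finset.card_univ, Fintype.card_fin,
      nsmul_eq_mul]
    rw [← mul_assoc, inv_mul_cancel₀ hN, one_mul, sub_self]
  have hC' : (E * C * E).PosSemidef := by
    refine Matrix.PosSemidef.of_dotProduct_mulVec_nonneg ?_ ?_
    · rw [IsHermitian, conjTranspose_eq_transpose_of_trivial, transpose_mul, transpose_mul,
        hEsym, hsym, Matrix.mul_assoc]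
    · intro x
      have h1 : (E * C * E) *ᵥ x = E *ᵥ (C *ᵥ (E *ᵥ x)) := by
        rw [← mulVec_mulVec, ← mulVec_mulVec]
      rw [star_trivial, h1, dotProduct_mulVec]
      nth_rewrite 1 [← hEsym]
      rw [vecMul_transpose]
      exact hcpd _ (hEmv x)
  have h0 := trace_XCXC_nonneg_psd hC' hX
  rwa [trace_conj_eq hXE hEX] at h0


lemma trace_XCXC_nonneg (hN : (N:ℝ) ≠ 0) {C : Matrix (Fin N) (Fin N) ℝ}
    (hsym : Cᵀ = C)
    (hdef : (∀ x : Fin N → ℝ, (∑ i, x i) = 0 → 0 ≤ x ⬝ᵥ C.mulVec x) ∨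
            (∀ x : Fin N → ℝ, (∑ i, x i) = 0 → x ⬝ᵥ C.mulVec x ≤ 0))
    {X : Matrix (Fin N) (Fin N) ℝ} (hX : Xᵀ = X) (hX1 : ∀ i, ∑ j, X i j = 0) :
    0 ≤ trace (X * C * X * C) := by
  rcases hdef with hc | hc
  · exact trace_XCXC_nonneg_cpd hN hsym hc hX hX1
  · have hs : (-C)ᵀ = -C := by rw [transpose_neg, hsym]
    have hc' : ∀ x : Fin N → ℝ, (∑ i, x i) = 0 → 0 ≤ x ⬝ᵥ (-C).mulVec x := fun x hx => by
      rw [neg_mulVec, dotProduct_neg]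
      linarith [hc x hx]
    have h0 := trace_XCXC_nonneg_cpd hN hs hc' hX hX1
    simpa [Matrix.mul_neg, Matrix.neg_mul, neg_neg] using h0

lemma Pmat_sym (T : Matrix (Fin N) (Fin n) ℝ) : (Pmat T)ᵀ = Pmat T := by
  simp [Pmat, transpose_mul, Matrix.diagonal_transpose, Matrix.mul_assoc]

lemma Pmat_quad (T : Matrix (Fin N) (Fin n) ℝ) (x : Fin N → ℝ) :
    x ⬝ᵥ (Pmat T) *ᵥ x = ∑ j, (∑ i, T i j)⁻¹ * (∑ i, T i j * x i) ^ 2 := by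
  rw [Pmat, ← mulVec_mulVec, ← mulVec_mulVec, dotProduct_mulVec, ← mulVec_transpose]
  simp only [dotProduct, mulVec_diagonal]
  refine Finset.sum_congr rfl fun j _ => ?_
  have hw : (Tᵀ *ᵥ x) j = ∑ i, T i j * x i := by
    simp [mulVec, dotProduct, transpose_apply, mul_comm]
  rw [hw]; ring

lemma Pmat_psd (T : Matrix (Fin N) (Fin n) ℝ) (hT : ∀ i k, 0 ≤ T i k) :
    (Pmat T).PosSemidef := by
  refine Matrix.PosSemidef.of_dotProduct_mulVec_nonneg ?_ ?_
  · rw [IsHermitian, conjTranspose_eq_transpose_of_trivial, Pmat_sym]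
  · intro x
    rw [star_trivial, Pmat_quad]
    refine Finset.sum_nonneg fun j _ => ?_
    have : 0 ≤ (∑ i, T i j)⁻¹ := inv_nonneg.2 (Finset.sum_nonneg fun i _ => hT i j)
    positivity

lemma Pmat_rowsum (T : Matrix (Fin N) (Fin n) ℝ) (hT : ∀ i k, 0 ≤ T i k) (i : Fin N) :
    ∑ m, Pmat T i m = ∑ j, T i j := by
  have hap : ∀ i m, Pmat T i m = ∑ j, T i j * (∑ i', T i' j)⁻¹ * T m j := by
    intro i m
    rw [Pmat, Matrix.mul_apply]
    simp [Matrix.mul_diagonal, transpose_apply]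
  calc ∑ m, Pmat T i m = ∑ m, ∑ j, T i j * (∑ i', T i' j)⁻¹ * T m j := by
        simp_rw [hap]
  _ = ∑ j, ∑ m, T i j * (∑ i', T i' j)⁻¹ * T m j := Finset.sum_comm
  _ = ∑ j, T i j * ((∑ i', T i' j)⁻¹ * (∑ m, T m j)) := by
        refine Finset.sum_congr rfl fun j _ => ?_
        rw [Finset.mul_sum, Finset.mul_sum]
        exact Finset.sum_congr rfl fun m _ => by ring
  _ = ∑ j, T i j := by
        refine Finset.sum_congr rfl fun j _ => ?_
        rcases eq_or_lt_of_le (Finset.sum_nonneg fun i' _ => hT i' j) with hz | hp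
        · have hTij : T i j = 0 := by
            have := (Finset.sum_eq_zero_iff_of_nonneg (fun i' _ => hT i' j)).1 hz.symm
            exact this i (Finset.mem_univ i)
          simp [hTij]
        · rw [inv_mul_cancel₀ (ne_of_gt hp), mul_one]

lemma Amat_sym {C : Matrix (Fin N) (Fin N) ℝ} (hsym : Cᵀ = C) (T : Matrix (Fin N) (Fin n) ℝ) :
    (Tᵀ * C * T)ᵀ = Tᵀ * C * T := by
  rw [transpose_mul, transpose_mul, transpose_transpose, hsym, Matrix.mul_assoc]

lemma trace_PCPC (T : Matrix (Fin N) (Fin n) ℝ) (D : Matrix (Fin n) (Fin n) ℝ)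
    (C : Matrix (Fin N) (Fin N) ℝ) :
    trace ((T * D * Tᵀ) * C * (T * D * Tᵀ) * C)
      = trace ((D * (Tᵀ * C * T)) * (D * (Tᵀ * C * T))) := by
  rw [show (T * D * Tᵀ) * C * (T * D * Tᵀ) * C
      = T * (D * (Tᵀ * (C * (T * (D * (Tᵀ * C)))))) from by simp only [Matrix.mul_assoc],
    trace_mul_comm]
  congr 1
  simp only [Matrix.mul_assoc]

lemma Sval_eq_trace (C : Matrix (Fin N) (Fin N) ℝ) (hsym : Cᵀ = C)
    (T : Matrix (Fin N) (Fin n) ℝ) :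
    Sval C T = trace (Pmat T * C * Pmat T * C) := by
  rw [Pmat, trace_PCPC]
  set A := Tᵀ * C * T with hA
  set d : Fin n → ℝ := fun j => (∑ i, T i j)⁻¹ with hd
  have step : trace ((diagonal d * A) * (diagonal d * A))
      = ∑ j, ∑ l, (d j * A j l) * (d l * A l j) := by
    simp only [Matrix.trace, Matrix.diag]
    refine Finset.sum_congr rfl fun j _ => ?_
    rw [Matrix.mul_apply]
    exact Finset.sum_congr rfl fun l _ => by rw [Matrix.diagonal_mul, Matrix.diagonal_mul]
  rw [step, Sval]
  refine Finset.sum_congr rfl fun j _ => ?_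
  refine Finset.sum_congr rfl fun l _ => ?_
  have hAs : (Tᵀ * C * T) l j = (Tᵀ * C * T) j l := by
    nth_rewrite 1 [← Amat_sym hsym T]; rw [transpose_apply]
  have hAs2 : A l j = A j l := hAs
  rw [hAs2]
  simp only [hd, mul_inv]
  ring

lemma inv_mul_sq (b x y : ℝ) : (b * x)⁻¹ * (b * y) ^ 2 = b * (x⁻¹ * y ^ 2) := by
  rcases eq_or_ne b 0 with rfl | hb
  · simp
  · rw [mul_inv, show b⁻¹ * x⁻¹ * (b * y) ^ 2 = (b⁻¹ * b) * (b * (x⁻¹ * y ^ 2)) from by ring,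
      inv_mul_cancel₀ hb, one_mul]

lemma sq_div_convex {s0 s1 u0 u1 a b : ℝ} (hs0 : 0 ≤ s0) (hs1 : 0 ≤ s1)
    (h0 : s0 = 0 → u0 = 0) (h1 : s1 = 0 → u1 = 0)
    (ha : 0 ≤ a) (hb : 0 ≤ b) (hab : a + b = 1) :
    (a * s0 + b * s1)⁻¹ * (a * u0 + b * u1) ^ 2
      ≤ a * (s0⁻¹ * u0 ^ 2) + b * (s1⁻¹ * u1 ^ 2) := by
  rcases eq_or_lt_of_le hs0 with hz0 | hp0
  · rw [h0 hz0.symm, ← hz0]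
    simp only [mul_zero, zero_add]
    rw [inv_mul_sq]
    simp
  · rcases eq_or_lt_of_le hs1 with hz1 | hp1
    · rw [h1 hz1.symm, ← hz1]
      simp only [mul_zero, add_zero]
      rw [inv_mul_sq]
      simp
    · have hd : 0 < a * s0 + b * s1 := by
        rcases eq_or_lt_of_le ha with ha0 | hap
        · have hb1 : b = 1 := by linarith
          rw [← ha0, hb1]; simpa using hp1
        · have : 0 < a * s0 := mul_pos hap hp0
          nlinarith [mul_nonneg hb hs1]
      have hs0' : s0 ≠ 0 := ne_of_gt hp0
      have hs1' : s1 ≠ 0 := ne_of_gt hp1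
      rw [inv_mul_eq_div, div_le_iff₀ hd, ← sub_nonneg]
      have expand : (a * (s0⁻¹ * u0 ^ 2) + b * (s1⁻¹ * u1 ^ 2)) * (a * s0 + b * s1)
          - (a * u0 + b * u1) ^ 2 = (a * b * (u0 * s1 - u1 * s0) ^ 2) / (s0 * s1) := by
        field_simp
        ring
      rw [expand]
      positivity

lemma Pmat_quad_convex (T0 T1 : Matrix (Fin N) (Fin n) ℝ)
    (hT0 : ∀ i k, 0 ≤ T0 i k) (hT1 : ∀ i k, 0 ≤ T1 i k) {a b : ℝ}
    (ha : 0 ≤ a) (hb : 0 ≤ b) (hab : a + b = 1) (x : Fin N → ℝ) :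
    x ⬝ᵥ (Pmat (a • T0 + b • T1)) *ᵥ x
      ≤ a * (x ⬝ᵥ (Pmat T0) *ᵥ x) + b * (x ⬝ᵥ (Pmat T1) *ᵥ x) := by
  rw [Pmat_quad, Pmat_quad, Pmat_quad, Finset.mul_sum, Finset.mul_sum,
    ← Finset.sum_add_distrib]
  refine Finset.sum_le_sum fun j _ => ?_
  have e1 : ∑ i, (a • T0 + b • T1) i j = a * (∑ i, T0 i j) + b * (∑ i, T1 i j) := by
    simp [Matrix.add_apply, Matrix.smul_apply, smul_eq_mul, Finset.sum_add_distrib,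
      Finset.mul_sum]
  have e2 : ∑ i, (a • T0 + b • T1) i j * x i
      = a * (∑ i, T0 i j * x i) + b * (∑ i, T1 i j * x i) := by
    simp only [Matrix.add_apply, Matrix.smul_apply, smul_eq_mul, add_mul, mul_assoc]
    rw [Finset.sum_add_distrib, Finset.mul_sum, Finset.mul_sum]
  have hz : ∀ (T : Matrix (Fin N) (Fin n) ℝ), (∀ i k, 0 ≤ T i k) →
      (∑ i, T i j) = 0 → (∑ i, T i j * x i) = 0 := by
    intro T hT hs
    refine Finset.sum_eq_zero fun i _ => ?_
    rw [(Finset.sum_eq_zero_iff_of_nonneg (fun i' _ => hT i' j)).1 hs i (Finset.mem_univ i),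
      zero_mul]
  rw [e1, e2]
  exact sq_div_convex (Finset.sum_nonneg fun i _ => hT0 i j)
    (Finset.sum_nonneg fun i _ => hT1 i j) (hz T0 hT0) (hz T1 hT1) ha hb hab

lemma scalar1 {s A c : ℝ} (hs : 0 ≤ s) (hA : s = 0 → A = 0) :
    -(A ^ 2 * s⁻¹) ≤ s * c ^ 2 - 2 * c * A := by
  rcases eq_or_lt_of_le hs with hz | hp
  · rw [hA hz.symm, ← hz]
    simp
  · have e : s * c ^ 2 - 2 * c * A + A ^ 2 * s⁻¹ = (s * c - A) ^ 2 * s⁻¹ := by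
      field_simp
      ring
    nlinarith [mul_nonneg (sq_nonneg (s * c - A)) (inv_nonneg.2 hs), e]

lemma scalar2 {s A : ℝ} (hs : 0 ≤ s) (hA : s = 0 → A = 0) :
    s * (A * s⁻¹) ^ 2 - 2 * (A * s⁻¹) * A = -(A ^ 2 * s⁻¹) := by
  rcases eq_or_lt_of_le hs with hz | hp
  · rw [hA hz.symm, ← hz]
    simp
  · field_simp
    ring

lemma Am_apply (C : Matrix (Fin N) (Fin N) ℝ) (T : Matrix (Fin N) (Fin n) ℝ) (j l : Fin n) :
    (Tᵀ * C * T) j l = ∑ i, ∑ k, C i k * T i j * T k l := by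
  rw [Matrix.mul_apply]
  simp_rw [Matrix.mul_apply, transpose_apply, Finset.sum_mul]
  rw [Finset.sum_comm]
  exact Finset.sum_congr rfl fun i _ => Finset.sum_congr rfl fun k _ => by ring

lemma Fexpand (C : Matrix (Fin N) (Fin N) ℝ) (T : Matrix (Fin N) (Fin n) ℝ)
    (h : Fin N → ℝ) (hTs : ∀ i, ∑ k, T i k = h i)
    (Cb : Matrix (Fin n) (Fin n) ℝ) :
    ∑ i, ∑ j, ∑ k, ∑ l, (C i k - Cb j l) ^ 2 * T i j * T k l
      = (∑ i, ∑ k, C i k ^ 2 * (h i * h k))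
        + ∑ j, ∑ l, (((∑ i, T i j) * (∑ i, T i l)) * Cb j l ^ 2
            - 2 * Cb j l * ((Tᵀ * C * T) j l)) := by
  have reorder : ∑ i, ∑ j, ∑ k, ∑ l, (C i k - Cb j l) ^ 2 * T i j * T k l
      = ∑ j, ∑ l, ∑ i, ∑ k, (C i k - Cb j l) ^ 2 * T i j * T k l := by
    refine Eq.trans Finset.sum_comm (Finset.sum_congr rfl fun j _ => ?_)
    exact Eq.trans (Finset.sum_congr rfl fun i _ => Finset.sum_comm) Finset.sum_comm
  rw [reorder]
  have perjl : ∀ j l, ∑ i, ∑ k, (C i k - Cb j l) ^ 2 * T i j * T k l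
      = (∑ i, ∑ k, C i k ^ 2 * (T i j * T k l))
        + (((∑ i, T i j) * (∑ i, T i l)) * Cb j l ^ 2
            - 2 * Cb j l * ((Tᵀ * C * T) j l)) := by
    intro j l
    rw [Am_apply]
    have hA : ∑ i, ∑ k, (C i k - Cb j l) ^ 2 * T i j * T k l
        = ∑ i, ∑ k, (C i k ^ 2 * (T i j * T k l)
            + (Cb j l ^ 2 * (T i j * T k l) - 2 * Cb j l * (C i k * T i j * T k l))) :=
      Finset.sum_congr rfl fun i _ => Finset.sum_congr rfl fun k _ => by ring
    have hsplit : ∑ i, ∑ k, (C i k ^ 2 * (T i j * T k l)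
            + (Cb j l ^ 2 * (T i j * T k l) - 2 * Cb j l * (C i k * T i j * T k l)))
        = (∑ i, ∑ k, C i k ^ 2 * (T i j * T k l))
          + ((∑ i, ∑ k, Cb j l ^ 2 * (T i j * T k l))
            - ∑ i, ∑ k, 2 * Cb j l * (C i k * T i j * T k l)) := by
      simp only [Finset.sum_add_distrib, Finset.sum_sub_distrib]
    have hB : ∑ i, ∑ k, Cb j l ^ 2 * (T i j * T k l)
        = ((∑ i, T i j) * (∑ i, T i l)) * Cb j l ^ 2 := by
      rw [Finset.sum_mul_sum, Finset.sum_mul]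
      refine (Finset.sum_congr rfl fun i _ => ?_).symm
      rw [Finset.sum_mul]
      exact Finset.sum_congr rfl fun k _ => by ring
    have hD : ∑ i, ∑ k, 2 * Cb j l * (C i k * T i j * T k l)
        = 2 * Cb j l * (∑ i, ∑ k, C i k * T i j * T k l) := by
      rw [Finset.mul_sum]
      exact Finset.sum_congr rfl fun i _ => (Finset.mul_sum _ _ _).symm
    rw [hA, hsplit, hB, hD]
  simp_rw [perjl]
  simp only [Finset.sum_add_distrib]
  congr 1
  · calc ∑ j, ∑ l, ∑ i, ∑ k, C i k ^ 2 * (T i j * T k l)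
        = ∑ i, ∑ j, ∑ k, ∑ l, C i k ^ 2 * (T i j * T k l) := by
          exact Eq.trans (Finset.sum_congr rfl fun j _ => Finset.sum_comm)
            (Eq.trans Finset.sum_comm (Finset.sum_congr rfl fun i _ =>
              Finset.sum_congr rfl fun j _ => Finset.sum_comm))
    _ = ∑ i, ∑ k, C i k ^ 2 * (h i * h k) := by
          refine Finset.sum_congr rfl fun i _ => ?_
          rw [Finset.sum_comm]
          refine Finset.sum_congr rfl fun k _ => ?_
          rw [← hTs i, ← hTs k, Finset.sum_mul_sum, Finset.mul_sum]
          refine Finset.sum_congr rfl fun j _ => (Finset.mul_sum _ _ _).symm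

lemma S_convex (hN : (N:ℝ) ≠ 0) {C : Matrix (Fin N) (Fin N) ℝ} (hsym : Cᵀ = C)
    (hdef : (∀ x : Fin N → ℝ, (∑ i, x i) = 0 → 0 ≤ x ⬝ᵥ C.mulVec x) ∨
            (∀ x : Fin N → ℝ, (∑ i, x i) = 0 → x ⬝ᵥ C.mulVec x ≤ 0))
    (h : Fin N → ℝ) (T0 T1 : Matrix (Fin N) (Fin n) ℝ)
    (hT0n : ∀ i k, 0 ≤ T0 i k) (hT0s : ∀ i, ∑ k, T0 i k = h i)
    (hT1n : ∀ i k, 0 ≤ T1 i k) (hT1s : ∀ i, ∑ k, T1 i k = h i)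
    {a b : ℝ} (ha : 0 ≤ a) (hb : 0 ≤ b) (hab : a + b = 1) :
    Sval C (a • T0 + b • T1) ≤ a * Sval C T0 + b * Sval C T1 := by
  have hTn : ∀ i k, 0 ≤ (a • T0 + b • T1) i k := fun i k => by
    simp only [Matrix.add_apply, Matrix.smul_apply, smul_eq_mul]
    exact add_nonneg (mul_nonneg ha (hT0n i k)) (mul_nonneg hb (hT1n i k))
  set P := Pmat (a • T0 + b • T1) with hP
  set P0 := Pmat T0 with hP0
  set P1 := Pmat T1 with hP1
  set X := a • P0 + b • P1 - P with hX
  set Y := P0 - P1 with hY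
  have hPpsd : P.PosSemidef := Pmat_psd _ hTn
  have hP0psd : P0.PosSemidef := Pmat_psd _ hT0n
  have hP1psd : P1.PosSemidef := Pmat_psd _ hT1n
  have hXsym : Xᵀ = X := by
    rw [hX, transpose_sub, transpose_add, transpose_smul, transpose_smul,
      Pmat_sym, Pmat_sym, Pmat_sym]
  have hXpsd : X.PosSemidef := by
    refine Matrix.PosSemidef.of_dotProduct_mulVec_nonneg ?_ ?_
    · rw [IsHermitian, conjTranspose_eq_transpose_of_trivial, hXsym]
    · intro x
      rw [star_trivial, hX]
      have expand : (a • P0 + b • P1 - P) *ᵥ x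
          = a • (P0 *ᵥ x) + b • (P1 *ᵥ x) - P *ᵥ x := by
        rw [Matrix.sub_mulVec, Matrix.add_mulVec, smul_mulVec, smul_mulVec]
      rw [expand, dotProduct_sub, dotProduct_add, dotProduct_smul, dotProduct_smul,
        smul_eq_mul, smul_eq_mul, sub_nonneg]
      exact Pmat_quad_convex T0 T1 hT0n hT1n ha hb hab x
  have hProw : ∀ i, ∑ m, P i m = h i := by
    intro i
    rw [hP, Pmat_rowsum _ hTn]
    calc ∑ j, (a • T0 + b • T1) i j = ∑ j, (a * T0 i j + b * T1 i j) := by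
          simp [Matrix.add_apply, Matrix.smul_apply, smul_eq_mul]
    _ = a * (∑ j, T0 i j) + b * (∑ j, T1 i j) := by
          rw [Finset.sum_add_distrib, Finset.mul_sum, Finset.mul_sum]
    _ = h i := by rw [hT0s, hT1s, ← add_mul, hab, one_mul]
  have hP0row : ∀ i, ∑ m, P0 i m = h i := fun i => by
    rw [hP0, Pmat_rowsum _ hT0n, hT0s]
  have hP1row : ∀ i, ∑ m, P1 i m = h i := fun i => by
    rw [hP1, Pmat_rowsum _ hT1n, hT1s]
  have hXrow : ∀ i, ∑ m, X i m = 0 := by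
    intro i
    rw [hX]
    simp only [Matrix.sub_apply, Matrix.add_apply, Matrix.smul_apply, smul_eq_mul]
    rw [Finset.sum_sub_distrib, Finset.sum_add_distrib, ← Finset.mul_sum, ← Finset.mul_sum,
      hProw, hP0row, hP1row, ← add_mul, hab, one_mul, sub_self]
  have hYsym : Yᵀ = Y := by rw [hY, transpose_sub, Pmat_sym, Pmat_sym]
  have hYrow : ∀ i, ∑ m, Y i m = 0 := by
    intro i
    rw [hY]
    simp only [Matrix.sub_apply]
    rw [Finset.sum_sub_distrib, hP0row, hP1row, sub_self]
  -- nonnegative cross terms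
  have hCXC : (C * X * C).PosSemidef := by
    have := hXpsd.conjTranspose_mul_mul_same C
    rwa [conjTranspose_eq_transpose_of_trivial, hsym] at this
  have hCPC : (C * P * C).PosSemidef := by
    have := hPpsd.conjTranspose_mul_mul_same C
    rwa [conjTranspose_eq_transpose_of_trivial, hsym] at this
  have c1 : 0 ≤ trace (P * C * X * C) := by
    rw [show P * C * X * C = P * (C * X * C) from by simp only [Matrix.mul_assoc]]
    exact trace_mul_nonneg hPpsd hCXC
  have c2 : 0 ≤ trace (X * C * P * C) := by
    rw [show X * C * P * C = X * (C * P * C) from by simp only [Matrix.mul_assoc]]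
    exact trace_mul_nonneg hXpsd hCPC
  have c3 : 0 ≤ trace (X * C * X * C) := by
    rw [show X * C * X * C = X * (C * X * C) from by simp only [Matrix.mul_assoc]]
    exact trace_mul_nonneg hXpsd hCXC
  -- step 1
  have step1 : trace (P * C * P * C) ≤ trace ((a • P0 + b • P1) * C * (a • P0 + b • P1) * C) := by
    have hPX : a • P0 + b • P1 = P + X := by rw [hX]; abel
    have expand : (P + X) * C * (P + X) * C
        = P * C * P * C + (P * C * X * C + (X * C * P * C + X * C * X * C)) := by
      simp only [Matrix.add_mul, Matrix.mul_add]
      abel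
    rw [hPX, expand, trace_add, trace_add, trace_add]
    linarith
  -- step 2
  have h01 : trace (P0 * C * P1 * C) = trace (P1 * C * P0 * C) := by
    rw [show P0 * C * P1 * C = (P0 * C) * (P1 * C) from by simp only [Matrix.mul_assoc],
      trace_mul_comm]
    simp only [Matrix.mul_assoc]
  have step2 : trace ((a • P0 + b • P1) * C * (a • P0 + b • P1) * C)
      = a * trace (P0 * C * P0 * C) + b * trace (P1 * C * P1 * C)
        - a * b * trace (Y * C * Y * C) := by
    have hb' : b = 1 - a := by linarith
    subst hb'
    rw [hY]
    simp only [Matrix.add_mul, Matrix.mul_add, Matrix.sub_mul, Matrix.mul_sub,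
      Matrix.smul_mul, Matrix.mul_smul, trace_add, trace_sub, trace_smul, smul_eq_mul]
    rw [h01]
    ring
  have step3 : 0 ≤ trace (Y * C * Y * C) := trace_XCXC_nonneg hN hsym hdef hYsym hYrow
  have hfin := step1.trans (le_of_eq step2)
  rw [Sval_eq_trace C hsym, Sval_eq_trace C hsym, Sval_eq_trace C hsym]
  rw [← hP, ← hP0, ← hP1]
  nlinarith [mul_nonneg (mul_nonneg ha hb) step3]

lemma Am_zero (C : Matrix (Fin N) (Fin N) ℝ) (T : Matrix (Fin N) (Fin n) ℝ)
    (hTn : ∀ i k, 0 ≤ T i k) (j l : Fin n)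
    (hz : (∑ i, T i j) * (∑ i, T i l) = 0) : (Tᵀ * C * T) j l = 0 := by
  rw [Am_apply]
  rcases mul_eq_zero.1 hz with hz' | hz'
  · refine Finset.sum_eq_zero fun i _ => Finset.sum_eq_zero fun k _ => ?_
    rw [(Finset.sum_eq_zero_iff_of_nonneg (fun i' _ => hTn i' j)).1 hz' i (Finset.mem_univ i)]
    ring
  · refine Finset.sum_eq_zero fun i _ => Finset.sum_eq_zero fun k _ => ?_
    rw [(Finset.sum_eq_zero_iff_of_nonneg (fun i' _ => hTn i' l)).1 hz' k (Finset.mem_univ k)]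
    ring

lemma iInf_eq (C : Matrix (Fin N) (Fin N) ℝ) (h : Fin N → ℝ)
    (T : Matrix (Fin N) (Fin n) ℝ) (hTn : ∀ i k, 0 ≤ T i k)
    (hTs : ∀ i, ∑ k, T i k = h i) :
    (⨅ Cb : Matrix (Fin n) (Fin n) ℝ,
        ∑ i, ∑ j, ∑ k, ∑ l, (C i k - Cb j l) ^ 2 * T i j * T k l)
      = (∑ i, ∑ k, C i k ^ 2 * (h i * h k)) - Sval C T := by
  set K := ∑ i, ∑ k, C i k ^ 2 * (h i * h k) with hK
  have hsnn : ∀ j l : Fin n, 0 ≤ (∑ i, T i j) * (∑ i, T i l) := fun j l =>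
    mul_nonneg (Finset.sum_nonneg fun i _ => hTn i j) (Finset.sum_nonneg fun i _ => hTn i l)
  have hneg : ∑ j, ∑ l, -(((Tᵀ * C * T) j l) ^ 2 * ((∑ i, T i j) * (∑ i, T i l))⁻¹)
      = -Sval C T := by
    rw [Sval, ← Finset.sum_neg_distrib]
    exact Finset.sum_congr rfl fun j _ => Finset.sum_neg_distrib _
  have hlb : ∀ Cb : Matrix (Fin n) (Fin n) ℝ, K - Sval C T
      ≤ ∑ i, ∑ j, ∑ k, ∑ l, (C i k - Cb j l) ^ 2 * T i j * T k l := by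
    intro Cb
    rw [Fexpand C T h hTs Cb]
    have hsum : ∑ j, ∑ l, -(((Tᵀ * C * T) j l) ^ 2 * ((∑ i, T i j) * (∑ i, T i l))⁻¹)
        ≤ ∑ j, ∑ l, (((∑ i, T i j) * (∑ i, T i l)) * Cb j l ^ 2
            - 2 * Cb j l * ((Tᵀ * C * T) j l)) :=
      Finset.sum_le_sum fun j _ => Finset.sum_le_sum fun l _ =>
        scalar1 (hsnn j l) (Am_zero C T hTn j l)
    rw [hneg] at hsum
    linarith
  set Cbs : Matrix (Fin n) (Fin n) ℝ :=
    Matrix.of fun j l => (Tᵀ * C * T) j l * ((∑ i, T i j) * (∑ i, T i l))⁻¹ with hCbs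
  have hub : ∑ i, ∑ j, ∑ k, ∑ l, (C i k - Cbs j l) ^ 2 * T i j * T k l
      = K - Sval C T := by
    rw [Fexpand C T h hTs Cbs]
    have hsum : ∑ j, ∑ l, (((∑ i, T i j) * (∑ i, T i l)) * Cbs j l ^ 2
          - 2 * Cbs j l * ((Tᵀ * C * T) j l))
        = ∑ j, ∑ l, -(((Tᵀ * C * T) j l) ^ 2 * ((∑ i, T i j) * (∑ i, T i l))⁻¹) :=
      Finset.sum_congr rfl fun j _ => Finset.sum_congr rfl fun l _ =>
        scalar2 (hsnn j l) (Am_zero C T hTn j l)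
    rw [hsum, hneg]
    ring
  have hbdd : BddBelow (Set.range fun Cb : Matrix (Fin n) (Fin n) ℝ =>
      ∑ i, ∑ j, ∑ k, ∑ l, (C i k - Cb j l) ^ 2 * T i j * T k l) := by
    refine ⟨K - Sval C T, ?_⟩
    rintro y ⟨Cb, rfl⟩
    exact hlb Cb
  exact le_antisymm (le_trans (ciInf_le hbdd Cbs) (le_of_eq hub)) (le_ciInf hlb)

end Stmt13Aux

open Stmt13Aux in
/-- with `C_X` symmetric and CPD or CND, the function
`G(T) = min_{C̄} ∑ (C_X ik − C̄ jl)² T ij T kl` is concave on the semi-relaxed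
coupling polytope `U_n(h)`. -/
theorem stmt13 {N n : ℕ} (h : Fin N → ℝ)
    (hnn : ∀ i, 0 ≤ h i) (hsum : ∑ i, h i = 1)
    (CX : Matrix (Fin N) (Fin N) ℝ) (hsym : CXᵀ = CX)
    (hdef : (∀ x : Fin N → ℝ, (∑ i, x i) = 0 → 0 ≤ x ⬝ᵥ CX.mulVec x) ∨
            (∀ x : Fin N → ℝ, (∑ i, x i) = 0 → x ⬝ᵥ CX.mulVec x ≤ 0)) :
    ConcaveOn ℝ
      {T : Matrix (Fin N) (Fin n) ℝ | (∀ i k, 0 ≤ T i k) ∧ ∀ i, ∑ k, T i k = h i}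
      (fun T => ⨅ Cb : Matrix (Fin n) (Fin n) ℝ,
        ∑ i, ∑ j, ∑ k, ∑ l, (CX i k - Cb j l) ^ 2 * T i j * T k l) := by
  have hN0 : N ≠ 0 := by
    rintro rfl
    simp at hsum
  have hN : (N:ℝ) ≠ 0 := Nat.cast_ne_zero.2 hN0
  constructor
  · intro T0 hT0 T1 hT1 a b ha hb hab
    refine ⟨fun i k => ?_, fun i => ?_⟩
    · simp only [Matrix.add_apply, Matrix.smul_apply, smul_eq_mul]
      exact add_nonneg (mul_nonneg ha (hT0.1 i k)) (mul_nonneg hb (hT1.1 i k))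
    · calc ∑ k, (a • T0 + b • T1) i k = ∑ k, (a * T0 i k + b * T1 i k) := by
            simp [Matrix.add_apply, Matrix.smul_apply, smul_eq_mul]
      _ = a * (∑ k, T0 i k) + b * (∑ k, T1 i k) := by
            rw [Finset.sum_add_distrib, Finset.mul_sum, Finset.mul_sum]
      _ = h i := by rw [hT0.2, hT1.2, ← add_mul, hab, one_mul]
  · intro T0 hT0 T1 hT1 a b ha hb hab
    have hTn : ∀ i k, 0 ≤ (a • T0 + b • T1) i k := fun i k => by
      simp only [Matrix.add_apply, Matrix.smul_apply, smul_eq_mul]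
      exact add_nonneg (mul_nonneg ha (hT0.1 i k)) (mul_nonneg hb (hT1.1 i k))
    have hTs : ∀ i, ∑ k, (a • T0 + b • T1) i k = h i := fun i => by
      calc ∑ k, (a • T0 + b • T1) i k = ∑ k, (a * T0 i k + b * T1 i k) := by
            simp [Matrix.add_apply, Matrix.smul_apply, smul_eq_mul]
      _ = a * (∑ k, T0 i k) + b * (∑ k, T1 i k) := by
            rw [Finset.sum_add_distrib, Finset.mul_sum, Finset.mul_sum]
      _ = h i := by rw [hT0.2, hT1.2, ← add_mul, hab, one_mul]
    dsimp only
    rw [iInf_eq CX h T0 hT0.1 hT0.2, iInf_eq CX h T1 hT1.1 hT1.2,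
      iInf_eq CX h _ hTn hTs]
    set K := ∑ i, ∑ k, CX i k ^ 2 * (h i * h k) with hK
    have hKab : a * K + b * K = K := by rw [← add_mul, hab, one_mul]
    have hS := S_convex hN hsym hdef h T0 T1 hT0.1 hT0.2 hT1.1 hT1.2 ha hb hab
    simp only [smul_eq_mul]
    nlinarith [hS, hKab]
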